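/- Piola identity: let v : ℝⁿ → ℝⁿ be twice continuously differentiable (ContDiff ℝ 2). Let C(x) = cof(Dv(x)) be the cofactor matrix of the Jacobian matrix Dv(x) = (∂_i v_j(x))_{ji}. Then every row of C is divergence free: for each j and each x, ∑_i ∂_i ( x ↦ C(x)_{ji} )(x) = 0. -/

import Mathlib

open Matrix

/-- The Jacobian matrix of a vector field `v : ℝⁿ → ℝⁿ`:
`(jacobian v x)_{ji} = ∂_i v_j (x)`. -/
noncomputable def jacobian {n : ℕ} (v : (Fin n → ℝ) → (Fin n → ℝ)) (x : Fin n → ℝ) :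
    Matrix (Fin n) (Fin n) ℝ :=
  Matrix.of fun j i => fderiv ℝ (fun y => v y j) x (Pi.single i 1)

/-- Determinant as a continuous multilinear map in the rows. -/
noncomputable def detCM (n : ℕ) :
    ContinuousMultilinearMap ℝ (fun _ : Fin n => (Fin n → ℝ)) ℝ :=
  ∑ σ : Equiv.Perm (Fin n), (Equiv.Perm.sign σ : ℤ) •
    ((ContinuousMultilinearMap.mkPiAlgebra ℝ (Fin n) ℝ).compContinuousLinearMap
      (fun i => ContinuousLinearMap.proj (σ i)))

lemma detCM_apply {n : ℕ} (m : Fin n → Fin n → ℝ) :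
    detCM n m = Matrix.det (Matrix.of m) := by
  rw [Matrix.det_apply]
  simp only [detCM, ContinuousMultilinearMap.sum_apply, ContinuousMultilinearMap.smul_apply,
    ContinuousMultilinearMap.compContinuousLinearMap_apply,
    ContinuousMultilinearMap.mkPiAlgebra_apply, ContinuousLinearMap.proj_apply]
  rw [← Equiv.sum_comp (Equiv.inv (Equiv.Perm (Fin n)))]
  refine Finset.sum_congr rfl fun σ _ => ?_
  simp only [Equiv.inv_apply, Equiv.Perm.sign_inv]
  congr 1
  rw [← Equiv.prod_comp σ (fun i => m i (σ⁻¹ i))]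
  simp

lemma detCM_swap {n : ℕ} (m : Fin n → Fin n → ℝ) {j k : Fin n} (hjk : j ≠ k)
    (u w : Fin n → ℝ) :
    detCM n (Function.update (Function.update m j w) k u)
      = - detCM n (Function.update (Function.update m j u) k w) := by
  have h : (Function.update (Function.update m j w) k u)
      = fun i => (Function.update (Function.update m j u) k w) (Equiv.swap j k i) := by
    funext i
    rcases eq_or_ne i j with rfl | hij
    · rw [Equiv.swap_apply_left, Function.update_of_ne hjk,
        Function.update_self, Function.update_self]
    rcases eq_or_ne i k with rfl | hik
    · rw [Equiv.swap_apply_right, Function.update_self, Function.update_of_ne hjk,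
        Function.update_self]
    · rw [Equiv.swap_apply_of_ne_of_ne hij hik, Function.update_of_ne hik,
        Function.update_of_ne hij, Function.update_of_ne hik, Function.update_of_ne hij]
  rw [h, detCM_apply, detCM_apply]
  have := Matrix.det_permute (Equiv.swap j k)
      (Matrix.of (Function.update (Function.update m j u) k w))
  simpa [Matrix.submatrix, Equiv.Perm.sign_swap hjk] using this

/-- Piola identity: if `v : ℝⁿ → ℝⁿ` is `C²`, then every row of the cofactor matrix
`cof (Dv) = (adjugate (Dv))ᵀ` of its Jacobian is divergence free:
`∑_i ∂_i (cof Dv)_{ji} = 0` for every `j` and every `x`. -/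
theorem piola_identity {n : ℕ} (v : (Fin n → ℝ) → (Fin n → ℝ))
    (hv : ContDiff ℝ 2 v) (j : Fin n) (x : Fin n → ℝ) :
    ∑ i, fderiv ℝ (fun y => ((jacobian v y).adjugate)ᵀ j i) x (Pi.single i 1) = 0 := by
  classical
  set e : Fin n → (Fin n → ℝ) := fun i => Pi.single i 1 with he
  have hvk : ∀ k, ContDiff ℝ 2 (fun y => v y k) := fun k => contDiff_pi.1 hv k
  have hC1 : ∀ k, ContDiff ℝ 1 (fderiv ℝ (fun y => v y k)) := fun k =>
    (hvk k).fderiv_right (by norm_num)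
  have hA : ∀ k l, ContDiff ℝ 1 (fun y => fderiv ℝ (fun y => v y k) y (e l)) := fun k l =>
    (hC1 k).clm_apply contDiff_const
  set D : Fin n → Fin n → ((Fin n → ℝ) →L[ℝ] ℝ) :=
    fun k l => fderiv ℝ (fun y => fderiv ℝ (fun y => v y k) y (e l)) x with hDdef
  have hDf : ∀ k l, HasFDerivAt (fun y => fderiv ℝ (fun y => v y k) y (e l)) (D k l) x :=
    fun k l => (((hA k l).differentiable one_ne_zero) x).hasFDerivAt
  set H : Fin n → ((Fin n → ℝ) →L[ℝ] ((Fin n → ℝ) →L[ℝ] ℝ)) :=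
    fun k => fderiv ℝ (fderiv ℝ (fun y => v y k)) x with hHdef
  have hHf : ∀ k, HasFDerivAt (fderiv ℝ (fun y => v y k)) (H k) x := fun k =>
    (((hC1 k).differentiable one_ne_zero) x).hasFDerivAt
  have hDH : ∀ k l w, D k l w = H k w (e l) := by
    intro k l w
    have h2 : HasFDerivAt (fun y => fderiv ℝ (fun y => v y k) y (e l))
        ((ContinuousLinearMap.apply ℝ ℝ (e l)).comp (H k)) x :=
      (ContinuousLinearMap.apply ℝ ℝ (e l)).hasFDerivAt.comp x (hHf k)
    rw [(hDf k l).unique h2]; rfl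
  have hsymm : ∀ k u w, H k u w = H k w u := fun k u w =>
    second_derivative_symmetric
      (f := fun y => v y k)
      (fun y => (((hvk k).differentiable (by norm_num)) y).hasFDerivAt) (hHf k) u w
  set R : Fin n → Fin n → ℝ := fun k => jacobian v x k with hR
  -- the derivative of each cofactor entry
  have key : ∀ i, fderiv ℝ (fun y => ((jacobian v y).adjugate)ᵀ j i) x (e i)
      = ∑ k, detCM n (Function.update (Function.update R j (e i)) k
          (if k = j then 0 else fun l => D k l (e i))) := by
    intro i
    set g : Fin n → (Fin n → ℝ) → (Fin n → ℝ) := fun k =>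
      if k = j then (fun _ => e i) else fun y l => fderiv ℝ (fun y => v y k) y (e l) with hg
    set g' : Fin n → ((Fin n → ℝ) →L[ℝ] (Fin n → ℝ)) := fun k =>
      if k = j then 0 else ContinuousLinearMap.pi (fun l => D k l) with hg'
    have hgd : ∀ k, HasFDerivAt (g k) (g' k) x := by
      intro k
      by_cases hk : k = j
      · simp only [hg, hg', if_pos hk]; exact hasFDerivAt_const _ _
      · simp only [hg, hg', if_neg hk]
        exact hasFDerivAt_pi.2 fun l => hDf k l
    have hder := HasFDerivAt.multilinear_comp (detCM n) hgd
    have hfun : (fun y => ((jacobian v y).adjugate)ᵀ j i)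
        = fun y => detCM n (fun k => g k y) := by
      funext y
      rw [Matrix.transpose_apply, Matrix.adjugate_apply, detCM_apply]
      congr 1
      ext k l
      by_cases hk : k = j
      · subst hk; simp [hg, Matrix.updateRow_self, he]
      · simp [hg, Matrix.updateRow_ne hk, if_neg hk, jacobian, he]
    rw [hfun, hder.fderiv]
    rw [ContinuousLinearMap.sum_apply]
    refine Finset.sum_congr rfl fun k _ => ?_
    rw [ContinuousLinearMap.comp_apply,
      ContinuousMultilinearMap.toContinuousLinearMap_apply]
    have h1 : (fun k' => g k' x) = Function.update R j (e i) := by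
      funext k'
      by_cases hk' : k' = j
      · subst hk'; simp [hg]
      · funext l
        simp [hg, if_neg hk', Function.update_of_ne hk', hR, jacobian, he]
    have h2 : g' k (e i) = (if k = j then 0 else fun l => D k l (e i)) := by
      by_cases hk : k = j <;> simp [hg', hk]
    rw [h1, h2]
  rw [Finset.sum_congr rfl (fun i _ => key i)]
  rw [Finset.sum_comm]
  refine Finset.sum_eq_zero fun k _ => ?_
  by_cases hk : k = j
  · subst hk
    refine Finset.sum_eq_zero fun i _ => ?_
    rw [if_pos rfl, Function.update_idem]
    exact (detCM n).map_update_zero _ _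
  · -- rewrite via H and use symmetry/antisymmetry
    have hrw : ∀ i, detCM n (Function.update (Function.update R j (e i)) k
          (if k = j then 0 else fun l => D k l (e i)))
        = ∑ l, H k (e i) (e l) *
            detCM n (Function.update (Function.update R j (e i)) k (e l)) := by
      intro i
      rw [if_neg hk]
      have hw : (fun l => D k l (e i)) = ∑ l, (H k (e i) (e l)) • e l := by
        funext l'
        simp only [Finset.sum_apply, Pi.smul_apply, smul_eq_mul, he, Pi.single_apply]
        rw [Finset.sum_eq_single l']
        · rw [hDH k l' (Pi.single i 1)]; simp [he]
        · intro b _ hb; simp [Ne.symm hb]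
        · simp
      rw [hw]
      have := map_sum ((detCM n).toContinuousLinearMap (Function.update R j (e i)) k)
        (fun l => (H k (e i) (e l)) • e l) Finset.univ
      simp only [ContinuousMultilinearMap.toContinuousLinearMap_apply, _root_.map_smul] at this
      rw [this]
      simp [smul_eq_mul]
  
    rw [Finset.sum_congr rfl (fun i _ => hrw i)]
    set S := ∑ i, ∑ l, H k (e i) (e l) *
        detCM n (Function.update (Function.update R j (e i)) k (e l)) with hS
    have hneg : S = -S := by
      nth_rewrite 1 [hS]
      rw [Finset.sum_comm]
      rw [hS, ← Finset.sum_neg_distrib]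
      refine Finset.sum_congr rfl fun i _ => ?_
      rw [← Finset.sum_neg_distrib]
      refine Finset.sum_congr rfl fun l _ => ?_
      rw [hsymm k (e l) (e i), detCM_swap R (Ne.symm hk) (e l) (e i)]
      ring
    have : S = 0 := by linarith
    exact this
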